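/- Every weakly Mathias n-generic set G (n ≥ 3) is hyperimmune relative to ∅^(n−1); that is, no function computable in ∅^(n−1) dominates the principal function of G. -/

import Mathlib

open Classical

namespace MathiasGenerics

/-- Codes for oracle partial recursive functions. -/
inductive OCode : Type
  | zero : OCode
  | succ : OCode
  | left : OCode
  | right : OCode
  | oracle : OCode
  | pair : OCode → OCode → OCode
  | comp : OCode → OCode → OCode
  | prec : OCode → OCode → OCode
  | rfind' : OCode → OCode

/-- Evaluation of an oracle code relative to an oracle `g`. -/
def evalo (g : ℕ →. ℕ) : OCode → ℕ →. ℕ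
  | .zero => fun _ => Part.some 0
  | .succ => fun n => Part.some (n + 1)
  | .left => fun n => Part.some n.unpair.1
  | .right => fun n => Part.some n.unpair.2
  | .oracle => g
  | .pair cf cg => fun n => Nat.pair <$> evalo g cf n <*> evalo g cg n
  | .comp cf cg => fun n => evalo g cg n >>= evalo g cf
  | .prec cf cg =>
    Nat.unpaired fun a n =>
      n.rec (evalo g cf a) fun y IH => do
        let i ← IH
        evalo g cg (Nat.pair a (Nat.pair y i))
  | .rfind' cf =>
    Nat.unpaired fun a m =>
      (Nat.rfind fun n => (fun m => m = 0) <$> evalo g cf (Nat.pair a (n + m))).map (· + m)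

/-- An effective numbering of oracle codes. -/
def encodeOC : OCode → ℕ
  | .zero => 0
  | .succ => 1
  | .left => 2
  | .right => 3
  | .oracle => 4
  | .pair a b => 4 * Nat.pair (encodeOC a) (encodeOC b) + 5
  | .comp a b => 4 * Nat.pair (encodeOC a) (encodeOC b) + 6
  | .prec a b => 4 * Nat.pair (encodeOC a) (encodeOC b) + 7
  | .rfind' a => 4 * encodeOC a + 8

noncomputable def decodeOC (n : ℕ) : OCode :=
  if h : ∃ c, encodeOC c = n then h.choose else OCode.zero

/-- Characteristic function of a set of naturals. -/
noncomputable def χ (A : Set ℕ) : ℕ → ℕ := fun n => if n ∈ A then 1 else 0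

/-- The characteristic function viewed as a partial function. -/
noncomputable def χp (A : Set ℕ) : ℕ →. ℕ := fun n => Part.some (χ A n)

/-- `f` is partial recursive in the oracle `g`. -/
def PartRecIn (g : ℕ →. ℕ) (f : ℕ →. ℕ) : Prop := ∃ c : OCode, ∀ n, evalo g c n = f n

/-- `f` (total) is recursive in the set `B`. -/
def FunRecIn (B : Set ℕ) (f : ℕ → ℕ) : Prop := PartRecIn (χp B) (fun n => Part.some (f n))

/-- Turing reducibility between sets of naturals. -/
def TR (A B : Set ℕ) : Prop := PartRecIn (χp B) (χp A)

/-- Turing equivalence. -/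
def TE (A B : Set ℕ) : Prop := TR A B ∧ TR B A

/-- The Turing jump of a set. -/
noncomputable def jump (A : Set ℕ) : Set ℕ :=
  {e | ∃ c : OCode, encodeOC c = e ∧ (evalo (χp A) c e).Dom}

/-- Iterated Turing jump. -/
noncomputable def jumpIter (A : Set ℕ) : ℕ → Set ℕ
  | 0 => A
  | n + 1 => jump (jumpIter A n)

/-- `∅^(n)`. -/
noncomputable def emptyJump (n : ℕ) : Set ℕ := jumpIter ∅ n

/-- Effective join (recursive join) of two sets. -/
def join (A B : Set ℕ) : Set ℕ :=
  {n | (n % 2 = 0 ∧ n / 2 ∈ A) ∨ (n % 2 = 1 ∧ n / 2 ∈ B)}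

/-- `S` is computably enumerable in `B`. -/
def CeIn (B : Set ℕ) (S : Set ℕ) : Prop :=
  ∃ c : OCode, S = {n | (evalo (χp B) c n).Dom}

/-- `S` is `Σ⁰ₙ`. -/
noncomputable def Sigma0 : ℕ → Set ℕ → Prop
  | 0 => fun S => TR S ∅
  | n + 1 => fun S => CeIn (emptyJump n) S

/-- `S` is `Π⁰ₙ`. -/
noncomputable def Pi0 (n : ℕ) (S : Set ℕ) : Prop := Sigma0 n Sᶜ

/-- `S` is `Δ⁰ₙ`. -/
noncomputable def Delta0 (n : ℕ) (S : Set ℕ) : Prop := Sigma0 n S ∧ Pi0 n S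

/-- A set is computable iff Turing reducible to `∅`. -/
def ComputableSet (S : Set ℕ) : Prop := TR S ∅

/-! ### Mathias conditions, coded by naturals

A (code of a) pre-condition is a pair `⟨d, e⟩` where `d` canonically codes the
finite set `D` and `e` is a code of a total `{0,1}`-valued computable function
whose set of `1`s is `E`. -/

/-- The finite part `D` of the coded condition `p`. -/
def condD (p : ℕ) : Finset ℕ := Denumerable.ofNat (Finset ℕ) p.unpair.1

/-- The infinite part `E` of the coded condition `p`. -/
noncomputable def condE (p : ℕ) : Set ℕ :=
  {x | evalo (χp ∅) (decodeOC p.unpair.2) x = Part.some 1}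

/-- The function computing `E` is total and `{0,1}`-valued (so `E` is computable). -/
noncomputable def condETotal (p : ℕ) : Prop :=
  ∀ x, evalo (χp ∅) (decodeOC p.unpair.2) x = Part.some 0 ∨
    evalo (χp ∅) (decodeOC p.unpair.2) x = Part.some 1

/-- `p` codes a Mathias pre-condition `(D, E)`: `E` computable and `max D < min E`. -/
noncomputable def IsPreCond (p : ℕ) : Prop :=
  condETotal p ∧ ∀ d ∈ condD p, ∀ x ∈ condE p, d < x

/-- `p` codes a Mathias condition: a pre-condition with `E` infinite. -/
noncomputable def IsCond (p : ℕ) : Prop := IsPreCond p ∧ (condE p).Infinite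

/-- `q` extends `p`. -/
noncomputable def Ext (q p : ℕ) : Prop :=
  condD p ⊆ condD q ∧ ↑(condD q) ⊆ ↑(condD p) ∪ condE p ∧ condE q ⊆ condE p

/-- The set `A` satisfies the coded condition `p`. -/
noncomputable def Sat (A : Set ℕ) (p : ℕ) : Prop :=
  ↑(condD p) ⊆ A ∧ A ⊆ ↑(condD p) ∪ condE p

/-- `A` meets the set of coded conditions `C`. -/
noncomputable def Meets (A : Set ℕ) (C : Set ℕ) : Prop := ∃ p ∈ C, Sat A p

/-- `A` avoids `C`: it satisfies a condition with no extension in `C`. -/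
noncomputable def Avoids (A : Set ℕ) (C : Set ℕ) : Prop :=
  ∃ p, IsCond p ∧ Sat A p ∧ ∀ q, IsCond q → Ext q p → q ∉ C

/-- `C` is a set of conditions. -/
noncomputable def CondSet (C : Set ℕ) : Prop := ∀ p ∈ C, IsCond p

/-- `C` is a set of pre-conditions. -/
noncomputable def PreCondSet (C : Set ℕ) : Prop := ∀ p ∈ C, IsPreCond p

/-- `G` is Mathias `n`-generic. -/
noncomputable def MGen (n : ℕ) (G : Set ℕ) : Prop :=
  ∀ C : Set ℕ, Sigma0 n C → CondSet C → Meets G C ∨ Avoids G C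

/-- `C` is a dense set of conditions. -/
noncomputable def DenseCond (C : Set ℕ) : Prop := ∀ p, IsCond p → ∃ q ∈ C, Ext q p

/-- `G` is weakly Mathias `n`-generic. -/
noncomputable def WMGen (n : ℕ) (G : Set ℕ) : Prop :=
  ∀ C : Set ℕ, Sigma0 n C → CondSet C → DenseCond C → Meets G C

/-- `G` is strongly Mathias `n`-generic: for every `Σ⁰ₙ` set `C` of pre-conditions,
either `G` meets some condition in `C` or `G` meets the set of conditions not
extended by any condition in `C`. -/
noncomputable def SMGen (n : ℕ) (G : Set ℕ) : Prop :=
  ∀ C : Set ℕ, Sigma0 n C → PreCondSet C →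
    (∃ p ∈ C, IsCond p ∧ Sat G p) ∨
    (∃ p, IsCond p ∧ Sat G p ∧ ∀ q ∈ C, IsCond q → ¬ Ext q p)

/-- `A` is hyperimmune relative to `X`: `A` is infinite and its principal function
is not dominated by any `X`-recursive function. -/
noncomputable def HypImmRel (A X : Set ℕ) : Prop :=
  A.Infinite ∧ ∀ f : ℕ → ℕ, FunRecIn X f → ∃ n, f n < Nat.nth (· ∈ A) n

/-- `A` is bi-immune: neither `A` nor its complement has an infinite computable subset. -/
def BiImmune (A : Set ℕ) : Prop :=
  (∀ S : Set ℕ, ComputableSet S → S.Infinite → ¬ S ⊆ A) ∧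
    (∀ S : Set ℕ, ComputableSet S → S.Infinite → ¬ S ⊆ Aᶜ)

/-! ### Cohen forcing -/

/-- The binary string `σ` is an initial segment of (the characteristic function of) `A`. -/
def StrSat (A : Set ℕ) (σ : List Bool) : Prop :=
  ∀ i : Fin σ.length, (σ.get i = true ↔ (i : ℕ) ∈ A)

/-- A set of binary strings is `Σ⁰ₙ` (via the canonical coding). -/
noncomputable def Sigma0Str (n : ℕ) (C : Set (List Bool)) : Prop :=
  Sigma0 n (Encodable.encode '' C)

/-- `A` is Cohen `n`-generic. -/
noncomputable def CGen (n : ℕ) (A : Set ℕ) : Prop :=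
  ∀ C : Set (List Bool), Sigma0Str n C →
    (∃ σ ∈ C, StrSat A σ) ∨ (∃ σ, StrSat A σ ∧ ∀ τ ∈ C, ¬ σ <+: τ)

/-! ### Arithmetical formulas in one free set variable, and Mathias forcing -/

/-- Numeric terms: de Bruijn variables and numerals. -/
inductive Trm : Type
  | var : ℕ → Trm
  | cst : ℕ → Trm

/-- Value of a term under a valuation. -/
def tval (ρ : ℕ → ℕ) : Trm → ℕ
  | .var i => ρ i
  | .cst n => n

/-- Prenex formulas in one free set variable `X`.  The quantifier-free matrix is
given in disjunctive normal form: a disjunct `(P, N)` asserts `t ∈ X` for `t ∈ P`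
and `t ∉ X` for `t ∈ N`. -/
inductive Form : Type
  | dnf : List (List Trm × List Trm) → Form
  | ex : Form → Form
  | all : Form → Form

/-- Push a value onto a de Bruijn valuation. -/
def push (a : ℕ) (ρ : ℕ → ℕ) : ℕ → ℕ
  | 0 => a
  | i + 1 => ρ i

/-- Truth of a formula at the set `A` under the valuation `ρ`. -/
def FEval (ρ : ℕ → ℕ) (A : Set ℕ) : Form → Prop
  | .dnf ds => ∃ d ∈ ds, (∀ t ∈ d.1, tval ρ t ∈ A) ∧ (∀ t ∈ d.2, tval ρ t ∉ A)
  | .ex φ => ∃ a, FEval (push a ρ) A φ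
  | .all φ => ∀ a, FEval (push a ρ) A φ

/-- Strong Mathias forcing of `φ(G)` by the coded condition `p`, under valuation `ρ`. -/
noncomputable def Forces (p : ℕ) (ρ : ℕ → ℕ) : Form → Prop
  | .dnf ds => ∃ d ∈ ds, (∀ t ∈ d.1, tval ρ t ∈ condD p) ∧
      (∀ t ∈ d.2, tval ρ t ∉ (↑(condD p) ∪ condE p : Set ℕ))
  | .ex φ => ∃ a, Forces p (push a ρ) φ
  | .all φ => ∀ q, IsCond q → Ext q p → ∀ a, ∃ r, IsCond r ∧ Ext r q ∧ Forces r (push a ρ) φ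

/-- Classification of prenex formulas: `lev true n φ` means `φ` is `Σ⁰ₙ`,
`lev false n φ` means `φ` is `Π⁰ₙ`. -/
def lev : Bool → ℕ → Form → Prop
  | _, 0, .dnf _ => True
  | true, n + 1, .ex φ => lev false n φ
  | false, n + 1, .all φ => lev true n φ
  | _, _, _ => False

/-- `φ` is a `Σ⁰ₙ` formula. -/
def IsSig (n : ℕ) (φ : Form) : Prop := lev true n φ

/-- `φ` is a `Π⁰ₙ` formula. -/
def IsPiF (n : ℕ) (φ : Form) : Prop := lev false n φ

/-- All free variables of `φ` are `< k`. -/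
def ClosedB : ℕ → Form → Prop
  | k, .dnf ds => ∀ d ∈ ds, ∀ t ∈ d.1 ++ d.2, ∀ i, t = Trm.var i → i < k
  | k, .ex φ => ClosedB (k + 1) φ
  | k, .all φ => ClosedB (k + 1) φ

/-- `φ` has no free number variables (only the free set variable `X`). -/
def ClosedF (φ : Form) : Prop := ClosedB 0 φ

/-- The zero valuation. -/
def ρ0 : ℕ → ℕ := fun _ => 0

/-- Numbering of lists. -/
def encList {α : Type} (f : α → ℕ) : List α → ℕ
  | [] => 0
  | a :: l => Nat.pair (f a) (encList f l) + 1

/-- Numbering of terms. -/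
def encTrm : Trm → ℕ
  | .var i => 2 * i
  | .cst n => 2 * n + 1

/-- Numbering of formulas. -/
def encForm : Form → ℕ
  | .dnf ds => 3 * encList (fun d => Nat.pair (encList encTrm d.1) (encList encTrm d.2)) ds
  | .ex φ => 3 * encForm φ + 1
  | .all φ => 3 * encForm φ + 2

end MathiasGenerics

namespace MathiasGenerics

/-! ### Phase 1: encode/decode bijection for `OCode` -/

/-- Inverse of `encodeOC`. -/
def ofN : ℕ → OCode
  | 0 => .zero
  | 1 => .succ
  | 2 => .left
  | 3 => .right
  | 4 => .oracle
  | n + 5 =>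
    have hm : n / 4 < n + 5 := lt_of_le_of_lt (Nat.div_le_self _ _) (by omega)
    have _m1 : (n / 4).unpair.1 < n + 5 := lt_of_le_of_lt (Nat.unpair_left_le _) hm
    have _m2 : (n / 4).unpair.2 < n + 5 := lt_of_le_of_lt (Nat.unpair_right_le _) hm
    match n % 4 with
    | 0 => .pair (ofN (n / 4).unpair.1) (ofN (n / 4).unpair.2)
    | 1 => .comp (ofN (n / 4).unpair.1) (ofN (n / 4).unpair.2)
    | 2 => .prec (ofN (n / 4).unpair.1) (ofN (n / 4).unpair.2)
    | _ => .rfind' (ofN (n / 4))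

theorem encode_ofN : ∀ n, encodeOC (ofN n) = n := by
  intro n
  induction n using Nat.strong_induction_on with
  | _ n ih =>
    match n with
    | 0 | 1 | 2 | 3 | 4 => simp [ofN, encodeOC]
    | n + 5 =>
      have hm : n / 4 < n + 5 := lt_of_le_of_lt (Nat.div_le_self _ _) (by omega)
      have m1 : (n / 4).unpair.1 < n + 5 := lt_of_le_of_lt (Nat.unpair_left_le _) hm
      have m2 : (n / 4).unpair.2 < n + 5 := lt_of_le_of_lt (Nat.unpair_right_le _) hm
      have h4 : n % 4 < 4 := Nat.mod_lt _ (by norm_num)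
      rw [ofN]
      interval_cases h : n % 4 <;>
        · simp only [h]
          simp [encodeOC, ih _ m1, ih _ m2, ih _ hm, Nat.pair_unpair]
          omega

theorem ofN_encode : ∀ c, ofN (encodeOC c) = c := by
  intro c
  induction c with
  | zero => simp [ofN, encodeOC]
  | succ => simp [ofN, encodeOC]
  | left => simp [ofN, encodeOC]
  | right => simp [ofN, encodeOC]
  | oracle => simp [ofN, encodeOC]
  | pair a b iha ihb =>
    show ofN (4 * Nat.pair (encodeOC a) (encodeOC b) + 5) = _
    have h1 : (4 * Nat.pair (encodeOC a) (encodeOC b)) % 4 = 0 := by omega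
    have h2 : (4 * Nat.pair (encodeOC a) (encodeOC b)) / 4 = Nat.pair (encodeOC a) (encodeOC b) := by omega
    rw [ofN]
    simp [h1, h2, iha, ihb]
  | comp a b iha ihb =>
    show ofN ((4 * Nat.pair (encodeOC a) (encodeOC b) + 1) + 5) = _
    have h1 : (4 * Nat.pair (encodeOC a) (encodeOC b) + 1) % 4 = 1 := by omega
    have h2 : (4 * Nat.pair (encodeOC a) (encodeOC b) + 1) / 4 = Nat.pair (encodeOC a) (encodeOC b) := by omega
    rw [ofN]
    simp [h1, h2, iha, ihb]
  | prec a b iha ihb =>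
    show ofN ((4 * Nat.pair (encodeOC a) (encodeOC b) + 2) + 5) = _
    have h1 : (4 * Nat.pair (encodeOC a) (encodeOC b) + 2) % 4 = 2 := by omega
    have h2 : (4 * Nat.pair (encodeOC a) (encodeOC b) + 2) / 4 = Nat.pair (encodeOC a) (encodeOC b) := by omega
    rw [ofN]
    simp [h1, h2, iha, ihb]
  | rfind' a iha =>
    show ofN ((4 * encodeOC a + 3) + 5) = _
    have h1 : (4 * encodeOC a + 3) % 4 = 3 := by omega
    have h2 : (4 * encodeOC a + 3) / 4 = encodeOC a := by omega
    rw [ofN]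
    simp [h1, h2, iha]

theorem decodeOC_eq_ofN (n : ℕ) : decodeOC n = ofN n := by
  have h : ∃ c, encodeOC c = n := ⟨ofN n, encode_ofN n⟩
  have hs : encodeOC (h.choose) = n := h.choose_spec
  have := congrArg ofN hs
  rw [ofN_encode] at this
  rw [decodeOC, dif_pos h, this]

theorem decode_encode (c : OCode) : decodeOC (encodeOC c) = c := by
  rw [decodeOC_eq_ofN, ofN_encode]

theorem encode_decode (n : ℕ) : encodeOC (decodeOC n) = n := by
  rw [decodeOC_eq_ofN, encode_ofN]

end MathiasGenerics
namespace MathiasGenerics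

/-! ### Phase 2: basic relativized computability -/

/-- Embedding of plain codes into oracle codes. -/
def ofCode : Nat.Partrec.Code → OCode
  | .zero => .zero
  | .succ => .succ
  | .left => .left
  | .right => .right
  | .pair a b => .pair (ofCode a) (ofCode b)
  | .comp a b => .comp (ofCode a) (ofCode b)
  | .prec a b => .prec (ofCode a) (ofCode b)
  | .rfind' a => .rfind' (ofCode a)

theorem evalo_ofCode (g : ℕ →. ℕ) : ∀ c, evalo g (ofCode c) = c.eval := by
  intro c
  induction c with
  | zero => rfl
  | succ => rfl
  | left => rfl
  | right => rfl
  | pair a b iha ihb => simp [ofCode, evalo, Nat.Partrec.Code.eval, iha, ihb]; rfl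
  | comp a b iha ihb => simp [ofCode, evalo, Nat.Partrec.Code.eval, iha, ihb]; rfl
  | prec a b iha ihb => simp [ofCode, evalo, Nat.Partrec.Code.eval, iha, ihb]; rfl
  | rfind' a iha => simp [ofCode, evalo, Nat.Partrec.Code.eval, iha]; rfl

theorem PartRecIn.of_eq {g f f' : ℕ →. ℕ} (h : PartRecIn g f) (H : ∀ n, f n = f' n) :
    PartRecIn g f' := by
  obtain ⟨c, hc⟩ := h
  exact ⟨c, fun n => (hc n).trans (H n)⟩

theorem partRecIn_of_partrec {g f : ℕ →. ℕ} (hf : Nat.Partrec f) : PartRecIn g f := by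
  obtain ⟨c, hc⟩ := Nat.Partrec.Code.exists_code.1 hf
  exact ⟨ofCode c, fun n => by rw [evalo_ofCode, hc]⟩

theorem partRecIn_oracle (g : ℕ →. ℕ) : PartRecIn g g := ⟨.oracle, fun _ => rfl⟩

theorem PartRecIn.comp {g f h : ℕ →. ℕ} (hf : PartRecIn g f) (hh : PartRecIn g h) :
    PartRecIn g (fun n => h n >>= f) := by
  obtain ⟨cf, hcf⟩ := hf; obtain ⟨ch, hch⟩ := hh
  exact ⟨.comp cf ch, fun n => by simp [evalo, hcf, hch, funext hcf]⟩

theorem PartRecIn.pair {g f h : ℕ →. ℕ} (hf : PartRecIn g f) (hh : PartRecIn g h) :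
    PartRecIn g (fun n => Nat.pair <$> f n <*> h n) := by
  obtain ⟨cf, hcf⟩ := hf; obtain ⟨ch, hch⟩ := hh
  exact ⟨.pair cf ch, fun n => by simp [evalo, hcf, hch]⟩

/-- Substituting an oracle code for the oracle. -/
def substOC (d : OCode) : OCode → OCode
  | .zero => .zero
  | .succ => .succ
  | .left => .left
  | .right => .right
  | .oracle => d
  | .pair a b => .pair (substOC d a) (substOC d b)
  | .comp a b => .comp (substOC d a) (substOC d b)
  | .prec a b => .prec (substOC d a) (substOC d b)
  | .rfind' a => .rfind' (substOC d a)

theorem evalo_substOC {h : ℕ →. ℕ} {d : OCode} :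
    ∀ c, evalo h (substOC d c) = evalo (evalo h d) c := by
  intro c
  induction c with
  | zero => rfl
  | succ => rfl
  | left => rfl
  | right => rfl
  | oracle => rfl
  | pair a b iha ihb => simp [substOC, evalo, iha, ihb]; rfl
  | comp a b iha ihb => simp [substOC, evalo, iha, ihb]; rfl
  | prec a b iha ihb => simp [substOC, evalo, iha, ihb]; rfl
  | rfind' a iha => simp [substOC, evalo, iha]; rfl

theorem PartRecIn.trans {f g h : ℕ →. ℕ} (hf : PartRecIn g f) (hg : PartRecIn h g) :
    PartRecIn h f := by
  obtain ⟨c, hc⟩ := hf; obtain ⟨d, hd⟩ := hg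
  refine ⟨substOC d c, fun n => ?_⟩
  rw [evalo_substOC, show evalo h d = g from funext hd, hc]

/-! ### Total functions recursive in an oracle -/

/-- `F` (total, on ℕ) is recursive in the oracle `g`. -/
def TotRecIn (g : ℕ →. ℕ) (F : ℕ → ℕ) : Prop := PartRecIn g (fun n => Part.some (F n))

theorem funRecIn_iff_totRecIn {B : Set ℕ} {F : ℕ → ℕ} : FunRecIn B F ↔ TotRecIn (χp B) F :=
  Iff.rfl

theorem TotRecIn.of_primrec {g : ℕ →. ℕ} {F : ℕ → ℕ} (hF : Primrec F) : TotRecIn g F := by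
  have := Nat.Partrec.of_primrec (Primrec.nat_iff.1 hF)
  exact (partRecIn_of_partrec this).of_eq fun n => rfl

theorem TotRecIn.oracle {B : Set ℕ} : TotRecIn (χp B) (χ B) :=
  (partRecIn_oracle (χp B)).of_eq fun n => rfl

theorem TotRecIn.comp {g : ℕ →. ℕ} {F H : ℕ → ℕ} (hF : TotRecIn g F) (hH : TotRecIn g H) :
    TotRecIn g (fun n => F (H n)) :=
  (PartRecIn.comp hF hH).of_eq fun n => by simp

theorem TotRecIn.pair {g : ℕ →. ℕ} {F H : ℕ → ℕ} (hF : TotRecIn g F) (hH : TotRecIn g H) :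
    TotRecIn g (fun n => Nat.pair (F n) (H n)) :=
  (PartRecIn.pair hF hH).of_eq fun n => by simp [Seq.seq]

theorem TotRecIn.comp_primrec {g : ℕ →. ℕ} {F H : ℕ → ℕ} (hF : Primrec F)
    (hH : TotRecIn g H) : TotRecIn g (fun n => F (H n)) :=
  (TotRecIn.of_primrec hF).comp hH

theorem TotRecIn.primrec_comp {g : ℕ →. ℕ} {F H : ℕ → ℕ} (hF : TotRecIn g F)
    (hH : Primrec H) : TotRecIn g (fun n => F (H n)) :=
  hF.comp (TotRecIn.of_primrec hH)

theorem TotRecIn.comb₂ {g : ℕ →. ℕ} {F H : ℕ → ℕ} {φ : ℕ → ℕ → ℕ} (hφ : Primrec₂ φ)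
    (hF : TotRecIn g F) (hH : TotRecIn g H) : TotRecIn g (fun n => φ (F n) (H n)) := by
  have h1 : Primrec (fun m : ℕ => φ m.unpair.1 m.unpair.2) :=
    hφ.comp (Primrec.fst.comp Primrec.unpair) (Primrec.snd.comp Primrec.unpair)
  exact ((TotRecIn.of_primrec h1).comp (hF.pair hH)).of_eq fun n => by simp

theorem TotRecIn.trans {g h : ℕ →. ℕ} {F : ℕ → ℕ} (hF : TotRecIn g F)
    (hg : PartRecIn h g) : TotRecIn h F := PartRecIn.trans hF hg

end MathiasGenerics
namespace MathiasGenerics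

/-! ### Phase 3: the jump -/

/-- Constant codes. -/
def constO : ℕ → OCode
  | 0 => .zero
  | n + 1 => .comp .succ (constO n)

@[simp] theorem evalo_constO (g : ℕ →. ℕ) (x y : ℕ) : evalo g (constO x) y = Part.some x := by
  induction x with
  | zero => rfl
  | succ n ih => simp [constO, evalo, ih]

/-- The identity code. -/
def cid : OCode := .pair .left .right

@[simp] theorem evalo_cid (g : ℕ →. ℕ) (y : ℕ) : evalo g cid y = Part.some y := by
  simp [cid, evalo, Seq.seq]

/-- Numeral for `encodeOC (constO x)`. -/
def encConst : ℕ → ℕ := fun x => Nat.rec 0 (fun _ ih => 4 * Nat.pair 1 ih + 6) x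

theorem encConst_eq (x : ℕ) : encConst x = encodeOC (constO x) := by
  induction x with
  | zero => rfl
  | succ n ih => simp [encConst, constO, encodeOC] at ih ⊢; rw [ih]

theorem primrec_encConst : Primrec encConst := by
  have h : Primrec (fun p : ℕ × ℕ => 4 * Nat.pair 1 p.2 + 6) :=
    Primrec.nat_add.comp
      (Primrec.nat_mul.comp (Primrec.const 4)
        (Primrec₂.natPair.comp (Primrec.const 1) Primrec.snd))
      (Primrec.const 6)
  exact Primrec.nat_rec₁ 0 h.to₂

theorem mem_jump_iff {A : Set ℕ} {e : ℕ} :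
    e ∈ jump A ↔ (evalo (χp A) (decodeOC e) e).Dom := by
  constructor
  · rintro ⟨c, rfl, h⟩
    rwa [decode_encode]
  · intro h
    exact ⟨decodeOC e, encode_decode e, h⟩

/-- Reduction of the halting problem relative to `B` to `jump B`. -/
theorem sigmaToJump {B : Set ℕ} {f : ℕ →. ℕ} (hf : PartRecIn (χp B) f) :
    ∃ H : ℕ → ℕ, Primrec H ∧ ∀ p, (H p ∈ jump B ↔ (f p).Dom) := by
  obtain ⟨c, hc⟩ := hf
  refine ⟨fun p => 4 * Nat.pair (encodeOC c) (encConst p) + 6, ?_, ?_⟩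
  · exact Primrec.nat_add.comp
      (Primrec.nat_mul.comp (Primrec.const 4)
        (Primrec₂.natPair.comp (Primrec.const (encodeOC c)) primrec_encConst))
      (Primrec.const 6)
  · intro p
    dsimp only
    have he : (4 * Nat.pair (encodeOC c) (encConst p) + 6)
        = encodeOC (OCode.comp c (constO p)) := by
      simp [encodeOC, encConst_eq]
    rw [he, mem_jump_iff, decode_encode]
    show (evalo (χp B) (constO p) _ >>= fun x => evalo (χp B) c x).Dom ↔ _
    simp [hc]

/-- A `Σ⁰₁(B)` set is decidable in `jump B`. -/
theorem decInJump {B : Set ℕ} {f : ℕ →. ℕ} (hf : PartRecIn (χp B) f) :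
    TotRecIn (χp (jump B)) (fun p => if (f p).Dom then 1 else 0) := by
  obtain ⟨H, hH, hiff⟩ := sigmaToJump hf
  have : TotRecIn (χp (jump B)) (fun p => χ (jump B) (H p)) :=
    TotRecIn.oracle.primrec_comp hH
  refine this.of_eq fun p => ?_
  simp only [χ]
  by_cases h : (f p).Dom
  · rw [if_pos ((hiff p).2 h), if_pos h]
  · rw [if_neg (fun hh => h ((hiff p).1 hh)), if_neg h]

/-- Divergence-unless-one: a code whose domain is `{1}` post-composed with `F`. -/
theorem prDom1 {g : ℕ →. ℕ} {F : ℕ → ℕ} (hF : TotRecIn g F) :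
    ∃ c : OCode, ∀ p, (evalo g c p).Dom ↔ F p = 1 := by
  obtain ⟨cF, hcF⟩ := hF
  have hf0 : Primrec (fun w : ℕ => (w.unpair.1 - 1) + (1 - w.unpair.1)) :=
    Primrec.nat_add.comp
      (Primrec.nat_sub.comp (Primrec.fst.comp Primrec.unpair) (Primrec.const 1))
      (Primrec.nat_sub.comp (Primrec.const 1) (Primrec.fst.comp Primrec.unpair))
  have h1 := Nat.Partrec.rfind (Nat.Partrec.of_primrec (Primrec.nat_iff.1 hf0))
  obtain ⟨cd, hcd⟩ := partRecIn_of_partrec (g := g) h1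
  refine ⟨.comp cd cF, fun p => ?_⟩
  show (evalo g cF p >>= fun x => evalo g cd x).Dom ↔ _
  rw [hcF p]
  simp only [Part.bind_eq_bind, Part.bind_some, hcd]
  refine Nat.rfind_dom.trans ?_
  simp only [PFun.coe_val, Part.map_eq_map, Part.map_some, Part.mem_some_iff, Part.some_dom,
    decide_eq_true_eq, Nat.unpair_pair]
  constructor
  · rintro ⟨n, h, -⟩
    have := of_decide_eq_true h.symm
    omega
  · intro h
    refine ⟨0, ?_, fun {m} _ => trivial⟩
    symm; rw [decide_eq_true_eq]; omega

/-- Unbounded search: domain `{p | ∃ z, F (pair p z) = 0}`. -/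
theorem prRfindDom {g : ℕ →. ℕ} {F : ℕ → ℕ} (hF : TotRecIn g F) :
    ∃ c : OCode, ∀ p, (evalo g c p).Dom ↔ ∃ z, F (Nat.pair p z) = 0 := by
  obtain ⟨cF, hcF⟩ := hF
  refine ⟨.comp (.rfind' cF) (.pair cid .zero), fun p => ?_⟩
  show (evalo g (.pair cid .zero) p >>= fun x => evalo g (.rfind' cF) x).Dom ↔ _
  have h1 : evalo g (.pair cid .zero) p = Part.some (Nat.pair p 0) := by
    simp [evalo, Seq.seq]
  rw [h1]
  simp only [Part.bind_eq_bind, Part.bind_some]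
  show ((Nat.unpaired fun a m => (Nat.rfind fun n =>
      (fun m => m = 0) <$> evalo g cF (Nat.pair a (n + m))).map (· + m)) _).Dom ↔ _
  simp only [Nat.unpaired, Nat.unpair_pair, Part.map_Dom]
  refine Nat.rfind_dom.trans ?_
  constructor
  · rintro ⟨n, htrue, -⟩
    refine ⟨n, ?_⟩
    rw [hcF] at htrue
    simpa using htrue
  · rintro ⟨z, hz⟩
    refine ⟨z, ?_, fun {m} _ => ?_⟩
    · rw [hcF]; simpa using hz
    · rw [hcF]; simp

/-- Every set is computable from its jump. -/
theorem chi_recIn_jump (A : Set ℕ) : TotRecIn (χp (jump A)) (χ A) := by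
  obtain ⟨c, hc⟩ := prDom1 (g := χp A) TotRecIn.oracle
  have : TotRecIn (χp (jump A)) (fun p => if (evalo (χp A) c p).Dom then 1 else 0) :=
    decInJump ⟨c, fun _ => rfl⟩
  refine this.of_eq fun p => ?_
  simp only [hc p]
  by_cases h : p ∈ A <;> simp [χ, h]

theorem chip_emptyJump_le {k m : ℕ} (h : k ≤ m) :
    PartRecIn (χp (emptyJump m)) (χp (emptyJump k)) := by
  induction m with
  | zero =>
    have : k = 0 := Nat.le_zero.1 h
    subst this; exact partRecIn_oracle _
  | succ m ih =>
    rcases Nat.lt_or_ge k (m + 1) with h' | h'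
    · have hkm : k ≤ m := Nat.lt_succ_iff.1 h'
      exact (ih hkm).trans (chi_recIn_jump (emptyJump m))
    · have : k = m + 1 := le_antisymm h h'
      subst this; exact partRecIn_oracle _

end MathiasGenerics
namespace MathiasGenerics

/-! ### Phase 4: reductions of Σ⁰₁(∅) facts about coded conditions to `jump ∅` -/

theorem primrec_eqv (v : ℕ) : Primrec (fun y : ℕ => if y = v then 1 else 0) :=
  Primrec.ite (Primrec.eq.comp Primrec.id (Primrec.const v)) (Primrec.const 1) (Primrec.const 0)

/-- A code (relative to `χp ∅`) whose domain is `{v}`. -/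
noncomputable def delta (v : ℕ) : OCode :=
  Classical.choose (prDom1 (g := χp (∅ : Set ℕ)) (TotRecIn.of_primrec (primrec_eqv v)))

theorem delta_dom (v p : ℕ) : (evalo (χp (∅ : Set ℕ)) (delta v) p).Dom ↔ p = v := by
  unfold delta
  rw [Classical.choose_spec
    (prDom1 (g := χp (∅ : Set ℕ)) (TotRecIn.of_primrec (primrec_eqv v))) p]
  by_cases hp : p = v <;> simp [hp]

/-- Index of the machine `comp (delta v) (comp (decodeOC e) (constO z))`. -/
noncomputable def redVal (v e z : ℕ) : ℕ :=
  4 * Nat.pair (encodeOC (delta v)) (4 * Nat.pair e (encConst z) + 6) + 6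

theorem redVal_eq (v e z : ℕ) :
    redVal v e z = encodeOC (.comp (delta v) (.comp (decodeOC e) (constO z))) := by
  simp [redVal, encodeOC, encode_decode, encConst_eq]

theorem primrec₂_redVal (v : ℕ) : Primrec₂ (redVal v) := by
  have : Primrec (fun p : ℕ × ℕ =>
      4 * Nat.pair (encodeOC (delta v)) (4 * Nat.pair p.1 (encConst p.2) + 6) + 6) :=
    Primrec.nat_add.comp
      (Primrec.nat_mul.comp (Primrec.const 4)
        (Primrec₂.natPair.comp (Primrec.const (encodeOC (delta v)))
          (Primrec.nat_add.comp
            (Primrec.nat_mul.comp (Primrec.const 4)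
              (Primrec₂.natPair.comp Primrec.fst (primrec_encConst.comp Primrec.snd)))
            (Primrec.const 6))))
      (Primrec.const 6)
  exact this.to₂

theorem redVal_spec (v e z : ℕ) :
    redVal v e z ∈ jump (∅ : Set ℕ) ↔
      evalo (χp (∅ : Set ℕ)) (decodeOC e) z = Part.some v := by
  rw [redVal_eq, mem_jump_iff, decode_encode]
  show ((evalo _ (constO z) _ >>= fun x => evalo _ (decodeOC e) x) >>= fun x => evalo _ (delta v) x).Dom ↔ _
  rw [evalo_constO]
  simp only [Part.bind_eq_bind, Part.bind_some]
  rw [Part.dom_iff_mem]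
  constructor
  · rintro ⟨y, hy⟩
    rw [Part.mem_bind_iff] at hy
    obtain ⟨x, hxa, hyd⟩ := hy
    have hx : x = v := (delta_dom v x).1 (Part.dom_iff_mem.2 ⟨y, hyd⟩)
    subst hx; exact Part.eq_some_iff.2 hxa
  · intro h
    have hd : (evalo (χp (∅ : Set ℕ)) (delta v) v).Dom := (delta_dom v v).2 rfl
    exact ⟨_, Part.mem_bind_iff.2 ⟨v, by rw [h]; exact Part.mem_some v, Part.get_mem hd⟩⟩

end MathiasGenerics
namespace MathiasGenerics

theorem primrec_e1 : Primrec (fun y : ℕ => (y - 1) + (1 - y)) :=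
  Primrec.nat_add.comp (Primrec.nat_sub.comp Primrec.id (Primrec.const 1))
    (Primrec.nat_sub.comp (Primrec.const 1) Primrec.id)

/-- A code (relative to `χp ∅`) computing `fun y => (y - 1) + (1 - y)`. -/
noncomputable def e1code : OCode :=
  Classical.choose (TotRecIn.of_primrec (g := χp (∅ : Set ℕ)) primrec_e1)

theorem e1code_spec (y : ℕ) :
    evalo (χp (∅ : Set ℕ)) e1code y = Part.some ((y - 1) + (1 - y)) :=
  Classical.choose_spec (TotRecIn.of_primrec (g := χp (∅ : Set ℕ)) primrec_e1) y

/-- Searches for `x > k` with `evalo _ c x = 1`. -/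
noncomputable def Wcode (c : OCode) (k : ℕ) : OCode :=
  .comp (.rfind' (.comp e1code (.comp c .right))) (.pair .zero (constO (k + 1)))

/-- Index of `Wcode (decodeOC e) k`. -/
noncomputable def redInf (e k : ℕ) : ℕ :=
  4 * Nat.pair (4 * (4 * Nat.pair (encodeOC e1code) (4 * Nat.pair e 3 + 6) + 6) + 8)
      (4 * Nat.pair 0 (encConst (k + 1)) + 5) + 6

theorem redInf_eq (e k : ℕ) : redInf e k = encodeOC (Wcode (decodeOC e) k) := by
  simp [redInf, Wcode, encodeOC, encode_decode, encConst_eq]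

theorem primrec₂_redInf : Primrec₂ redInf := by
  have h : Primrec (fun p : ℕ × ℕ =>
      4 * Nat.pair (4 * (4 * Nat.pair (encodeOC e1code) (4 * Nat.pair p.1 3 + 6) + 6) + 8)
        (4 * Nat.pair 0 (encConst (p.2 + 1)) + 5) + 6) := by
    apply Primrec.nat_add.comp _ (Primrec.const 6)
    apply Primrec.nat_mul.comp (Primrec.const 4)
    apply Primrec₂.natPair.comp
    · apply Primrec.nat_add.comp _ (Primrec.const 8)
      apply Primrec.nat_mul.comp (Primrec.const 4)
      apply Primrec.nat_add.comp _ (Primrec.const 6)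
      apply Primrec.nat_mul.comp (Primrec.const 4)
      apply Primrec₂.natPair.comp (Primrec.const (encodeOC e1code))
      apply Primrec.nat_add.comp _ (Primrec.const 6)
      apply Primrec.nat_mul.comp (Primrec.const 4)
      exact Primrec₂.natPair.comp Primrec.fst (Primrec.const 3)
    · apply Primrec.nat_add.comp _ (Primrec.const 5)
      apply Primrec.nat_mul.comp (Primrec.const 4)
      apply Primrec₂.natPair.comp (Primrec.const 0)
      exact primrec_encConst.comp (Primrec.succ.comp Primrec.snd)
  exact h.to₂

theorem redInf_spec (e k : ℕ)
    (htot : ∀ y, evalo (χp (∅ : Set ℕ)) (decodeOC e) y = Part.some 0 ∨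
      evalo (χp (∅ : Set ℕ)) (decodeOC e) y = Part.some 1) :
    redInf e k ∈ jump (∅ : Set ℕ) ↔
      ∃ x, k < x ∧ evalo (χp (∅ : Set ℕ)) (decodeOC e) x = Part.some 1 := by
  set c := decodeOC e with hc
  have hZ : ∀ z b, evalo (χp (∅ : Set ℕ)) c z = Part.some b →
      evalo (χp (∅ : Set ℕ)) (.comp e1code (.comp c .right)) (Nat.pair 0 z)
        = Part.some ((b - 1) + (1 - b)) := by
    intro z b hb
    show (evalo _ (.comp c .right) _ >>= evalo _ e1code) = _
    show ((evalo _ OCode.right _ >>= fun x => evalo _ c x) >>= fun x => evalo _ e1code x) = _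
    simp only [evalo, Nat.unpair_pair, Part.bind_eq_bind, Part.bind_some, hb, e1code_spec]
  rw [redInf_eq, mem_jump_iff, decode_encode]
  show (evalo _ (.pair .zero (constO (k+1))) _ >>= fun x => evalo _ (.rfind' _) x).Dom ↔ _
  have h1 : evalo (χp (∅ : Set ℕ)) (.pair .zero (constO (k+1)))
      (encodeOC (Wcode c k)) = Part.some (Nat.pair 0 (k+1)) := by
    simp [evalo, Seq.seq]
  rw [h1]
  simp only [Part.bind_eq_bind, Part.bind_some]
  show ((Nat.unpaired fun a m => (Nat.rfind fun n =>
      (fun m => m = 0) <$> evalo _ (.comp e1code (.comp c .right)) (Nat.pair a (n + m))).map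
        (· + m)) _).Dom ↔ _
  simp only [Nat.unpaired, Nat.unpair_pair, Part.map_Dom]
  refine Nat.rfind_dom.trans ?_
  constructor
  · rintro ⟨n, htrue, -⟩
    rcases htot (n + (k + 1)) with h | h
    · rw [hZ _ _ h] at htrue
      simp at htrue
    · exact ⟨n + (k + 1), by omega, h⟩
  · rintro ⟨x, hx, h1x⟩
    refine ⟨x - (k + 1), ?_, fun {m} _ => ?_⟩
    · have hxe : x - (k + 1) + (k + 1) = x := by omega
      rw [hxe, hZ _ _ h1x]
      simp
    · rcases htot (m + (k + 1)) with h | h <;> rw [hZ _ _ h] <;> simp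

end MathiasGenerics
namespace MathiasGenerics

/-! ### Phase 5: the canonical encoding of the finite part -/

/-- The underlying list of the `n`-th finite set. -/
def LDl (k : ℕ) : List ℕ := Denumerable.ofNat (List ℕ) k

def lenD (k : ℕ) : ℕ := (LDl k).length

def sumD (k : ℕ) : ℕ := (LDl k).foldr (· + ·) 0

/-- The maximum of the `k`-th finite set (for nonempty sets). -/
def maxD (k : ℕ) : ℕ := sumD k + lenD k - 1

theorem sumD_eq (k : ℕ) : sumD k = (LDl k).sum := by
  rw [sumD, List.sum_eq_foldr]

theorem primrec_lenD : Primrec lenD :=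
  Primrec.list_length.comp (Primrec.ofNat (List ℕ))

theorem primrec_sumD : Primrec sumD :=
  Primrec.list_foldr (Primrec.ofNat (List ℕ)) (Primrec.const 0)
    (Primrec.nat_add.comp (Primrec.fst.comp Primrec.snd) (Primrec.snd.comp Primrec.snd)).to₂

theorem primrec_maxD : Primrec maxD :=
  Primrec.nat_sub.comp (Primrec.nat_add.comp primrec_sumD primrec_lenD) (Primrec.const 1)

theorem mem_condD_iff {p a : ℕ} :
    a ∈ condD p ↔ a ∈ Denumerable.raise' (LDl p.unpair.1) 0 := by
  rw [condD, show (Denumerable.ofNat (Finset ℕ) p.unpair.1) =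
    Finset.map (Denumerable.eqv ℕ).symm.toEmbedding
      (Denumerable.raise'Finset (Denumerable.ofNat (List ℕ) p.unpair.1) 0) from rfl]
  rw [Finset.mem_map]
  constructor
  · rintro ⟨b, hb, rfl⟩
    simpa [Denumerable.raise'Finset, Finset.mem_def, LDl, Denumerable.eqv] using hb
  · intro h
    refine ⟨a, ?_, by simp [Denumerable.eqv]⟩
    simpa [Denumerable.raise'Finset, Finset.mem_def, LDl] using h

theorem raise'_length : ∀ (l : List ℕ) (n : ℕ), (Denumerable.raise' l n).length = l.length
  | [], _ => rfl
  | m :: l, n => by simp [Denumerable.raise', raise'_length l (m + n + 1)]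

theorem raise'_lt : ∀ (l : List ℕ) (n : ℕ), ∀ a ∈ Denumerable.raise' l n,
    a < l.sum + n + l.length
  | [], _, a, ha => by simp [Denumerable.raise'] at ha
  | m :: l, n, a, ha => by
    simp only [Denumerable.raise', List.mem_cons] at ha
    rcases ha with rfl | ha
    · simp [List.sum_cons]; omega
    · have := raise'_lt l (m + n + 1) a ha
      simp [List.sum_cons]; omega

theorem raise'_max_mem : ∀ (l : List ℕ) (n : ℕ), l ≠ [] →
    l.sum + n + l.length - 1 ∈ Denumerable.raise' l n
  | [], _, h => absurd rfl h
  | m :: l, n, _ => by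
    rcases eq_or_ne l [] with rfl | hl
    · simp [Denumerable.raise']
    · have := raise'_max_mem l (m + n + 1) hl
      simp only [Denumerable.raise', List.mem_cons, List.sum_cons, List.length_cons]
      right
      have h1 : l.sum + (m + n + 1) + l.length - 1 = m + l.sum + n + (l.length + 1) - 1 := by
        omega
      rwa [h1] at this

theorem condD_card (p : ℕ) : (condD p).card = lenD p.unpair.1 := by
  rw [condD, show (Denumerable.ofNat (Finset ℕ) p.unpair.1) =
    Finset.map (Denumerable.eqv ℕ).symm.toEmbedding
      (Denumerable.raise'Finset (Denumerable.ofNat (List ℕ) p.unpair.1) 0) from rfl]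
  rw [Finset.card_map]
  show (Multiset.card _) = _
  simp only [Denumerable.raise'Finset]
  show (Denumerable.raise' (LDl p.unpair.1) 0).length = _
  rw [raise'_length]
  rfl

theorem condD_le_maxD {p a : ℕ} (ha : a ∈ condD p) : a ≤ maxD p.unpair.1 := by
  rw [mem_condD_iff] at ha
  have h1 := raise'_lt _ 0 a ha
  have h2 : LDl p.unpair.1 ≠ [] := by
    rintro h; rw [h] at ha; simp [Denumerable.raise'] at ha
  have h3 : 1 ≤ (LDl p.unpair.1).length := List.length_pos_iff.2 h2
  rw [maxD, sumD_eq, lenD]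
  omega

theorem maxD_mem {p : ℕ} (h : 1 ≤ lenD p.unpair.1) : maxD p.unpair.1 ∈ condD p := by
  have h2 : LDl p.unpair.1 ≠ [] := by
    intro hh
    rw [lenD, hh] at h; simp at h
  have := raise'_max_mem (LDl p.unpair.1) 0 h2
  rw [mem_condD_iff, maxD, sumD_eq, lenD]
  have h1 : LDl p.unpair.1 = Denumerable.ofNat (List ℕ) p.unpair.1 := rfl
  have h4 : (LDl p.unpair.1).sum + 0 + (LDl p.unpair.1).length - 1
      = (LDl p.unpair.1).sum + (LDl p.unpair.1).length - 1 := by omega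
  rwa [h4] at this

end MathiasGenerics
namespace MathiasGenerics

/-! ### Phase 7: running maxima -/

/-- Running maximum of `F` on `[0, x]`. -/
def runMax (F : ℕ → ℕ) : ℕ → ℕ := fun x => Nat.rec (F 0) (fun y ih => max ih (F (y + 1))) x

theorem le_runMax (F : ℕ → ℕ) {j x : ℕ} (h : j ≤ x) : F j ≤ runMax F x := by
  induction x with
  | zero =>
    have : j = 0 := by omega
    subst this; exact le_refl _
  | succ y ih =>
    rcases Nat.lt_or_ge j (y + 1) with h' | h'
    · exact le_trans (ih (by omega)) (le_max_left _ _)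
    · have : j = y + 1 := by omega
      subst this; exact le_max_right _ _

theorem runMax_mem (F : ℕ → ℕ) (x : ℕ) : ∃ j ≤ x, runMax F x = F j := by
  induction x with
  | zero => exact ⟨0, le_refl _, rfl⟩
  | succ y ih =>
    obtain ⟨j, hj, hje⟩ := ih
    rcases le_total (runMax F y) (F (y + 1)) with h | h
    · exact ⟨y + 1, le_refl _, max_eq_right h⟩
    · exact ⟨j, by omega, (max_eq_left h).trans hje⟩

theorem evalo_prec (g : ℕ →. ℕ) (cf cg : OCode) (n : ℕ) :
    evalo g (.prec cf cg) n = Nat.unpaired (fun a m =>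
      (m.rec (evalo g cf a) fun y IH => IH >>= fun i =>
        evalo g cg (Nat.pair a (Nat.pair y i)) : Part ℕ)) n := rfl

theorem totrec_runMax {g : ℕ →. ℕ} {F : ℕ → ℕ} (hF : TotRecIn g F) :
    TotRecIn g (runMax F) := by
  have u1 : Primrec (fun t : ℕ => t.unpair.1) := Primrec.fst.comp Primrec.unpair
  have u2 : Primrec (fun t : ℕ => t.unpair.2) := Primrec.snd.comp Primrec.unpair
  obtain ⟨cf, hcf⟩ := hF.primrec_comp (Primrec.const 0)
  obtain ⟨cg, hcg⟩ := TotRecIn.comb₂ Primrec.nat_max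
    (TotRecIn.of_primrec (u2.comp u2))
    (hF.primrec_comp (Primrec.succ.comp (u1.comp u2)))
  have key : ∀ x, (Nat.rec (evalo g cf 0)
      (fun y IH => IH >>= fun i => evalo g cg (Nat.pair 0 (Nat.pair y i))) x : Part ℕ)
      = Part.some (runMax F x) := by
    intro x
    induction x with
    | zero => exact hcf 0
    | succ y ihy =>
      show ((Nat.rec (evalo g cf 0)
          (fun y IH => IH >>= fun i => evalo g cg (Nat.pair 0 (Nat.pair y i))) y : Part ℕ)
            >>= fun i => evalo g cg (Nat.pair 0 (Nat.pair y i))) = _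
      rw [ihy]
      simp only [Part.bind_eq_bind, Part.bind_some, hcg, Nat.unpair_pair]
      rfl
  refine ⟨.comp (.prec cf cg) (.pair .zero cid), fun x => ?_⟩
  show (evalo g (.pair .zero cid) x >>= fun x => evalo g (.prec cf cg) x) = _
  have h1 : evalo g (.pair .zero cid) x = Part.some (Nat.pair 0 x) := by
    simp [evalo, Seq.seq]
  rw [h1]
  simp only [Part.bind_eq_bind, Part.bind_some]
  rw [evalo_prec]
  simp only [Nat.unpaired, Nat.unpair_pair]
  exact key x

end MathiasGenerics
namespace MathiasGenerics

/-! ### Phase 6: `IsCond` is decidable in `∅″` -/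

/-- The matrix of the Π⁰₁(jump ∅) characterization of `IsCond`. -/
def PsiProp (w : ℕ) : Prop :=
  (redVal 0 w.unpair.1.unpair.2 w.unpair.2 ∈ jump (∅ : Set ℕ) ∨
    redVal 1 w.unpair.1.unpair.2 w.unpair.2 ∈ jump (∅ : Set ℕ)) ∧
  (lenD w.unpair.1.unpair.1 = 0 ∨ redVal 1 w.unpair.1.unpair.2 w.unpair.2 ∉ jump (∅ : Set ℕ) ∨
    maxD w.unpair.1.unpair.1 < w.unpair.2) ∧
  redInf w.unpair.1.unpair.2 w.unpair.2 ∈ jump (∅ : Set ℕ)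

/-- Characteristic function of `PsiProp`. -/
noncomputable def chiPsi (w : ℕ) : ℕ := if PsiProp w then 1 else 0

theorem chiPsi_totRecIn : TotRecIn (χp (jump (∅ : Set ℕ))) chiPsi := by
  set J : Set ℕ := jump (∅ : Set ℕ) with hJ
  -- the three oracle queries
  have hA : TotRecIn (χp J) (fun w => χ J (redVal 0 w.unpair.1.unpair.2 w.unpair.2)) :=
    TotRecIn.oracle.primrec_comp
      ((primrec₂_redVal 0).comp
        (Primrec.snd.comp (Primrec.unpair.comp (Primrec.fst.comp Primrec.unpair)))
        (Primrec.snd.comp Primrec.unpair))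
  have hB : TotRecIn (χp J) (fun w => χ J (redVal 1 w.unpair.1.unpair.2 w.unpair.2)) :=
    TotRecIn.oracle.primrec_comp
      ((primrec₂_redVal 1).comp
        (Primrec.snd.comp (Primrec.unpair.comp (Primrec.fst.comp Primrec.unpair)))
        (Primrec.snd.comp Primrec.unpair))
  have hC : TotRecIn (χp J) (fun w => χ J (redInf w.unpair.1.unpair.2 w.unpair.2)) :=
    TotRecIn.oracle.primrec_comp
      (primrec₂_redInf.comp
        (Primrec.snd.comp (Primrec.unpair.comp (Primrec.fst.comp Primrec.unpair)))
        (Primrec.snd.comp Primrec.unpair))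
  -- bundle the queries with the input
  have hP : TotRecIn (χp J) (fun w => Nat.pair (χ J (redVal 0 w.unpair.1.unpair.2 w.unpair.2))
      (Nat.pair (χ J (redVal 1 w.unpair.1.unpair.2 w.unpair.2))
        (Nat.pair (χ J (redInf w.unpair.1.unpair.2 w.unpair.2)) w))) :=
    hA.pair (hB.pair (hC.pair (TotRecIn.of_primrec Primrec.id)))
  -- the primitive recursive postprocessing
  have u1 : Primrec (fun t : ℕ => t.unpair.1) := Primrec.fst.comp Primrec.unpair
  have u2 : Primrec (fun t : ℕ => t.unpair.2) := Primrec.snd.comp Primrec.unpair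
  have hw : Primrec (fun t : ℕ => t.unpair.2.unpair.2.unpair.2) := u2.comp (u2.comp u2)
  have hΦ : Primrec (fun t : ℕ =>
      if (t.unpair.1 = 1 ∨ t.unpair.2.unpair.1 = 1) ∧
        (lenD t.unpair.2.unpair.2.unpair.2.unpair.1.unpair.1 = 0 ∨
          ¬ t.unpair.2.unpair.1 = 1 ∨
          maxD t.unpair.2.unpair.2.unpair.2.unpair.1.unpair.1 <
            t.unpair.2.unpair.2.unpair.2.unpair.2) ∧
        t.unpair.2.unpair.2.unpair.1 = 1 then 1 else 0) := by
    apply Primrec.ite _ (Primrec.const 1) (Primrec.const 0)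
    apply PrimrecPred.and
    · exact PrimrecPred.or (Primrec.eq.comp u1 (Primrec.const 1))
        (Primrec.eq.comp (u1.comp u2) (Primrec.const 1))
    apply PrimrecPred.and
    · apply PrimrecPred.or
      · exact Primrec.eq.comp (primrec_lenD.comp (u1.comp (u1.comp hw))) (Primrec.const 0)
      apply PrimrecPred.or
      · exact PrimrecPred.not (Primrec.eq.comp (u1.comp u2) (Primrec.const 1))
      · exact Primrec.nat_lt.comp (primrec_maxD.comp (u1.comp (u1.comp hw))) (u2.comp hw)
    · exact Primrec.eq.comp (u1.comp (u2.comp u2)) (Primrec.const 1)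
  have := (TotRecIn.of_primrec hΦ).comp hP
  refine this.of_eq fun w => ?_
  congr 1
  simp only [Nat.unpair_pair]
  have hx : ∀ x : ℕ, (χ J x = 1) ↔ x ∈ J := by
    intro x; by_cases h : x ∈ J <;> simp [χ, h]
  rw [chiPsi]
  by_cases h : PsiProp w
  · rw [if_pos h, if_pos]
    obtain ⟨h1, h2, h3⟩ := h
    refine ⟨?_, ?_, (hx _).2 h3⟩
    · rcases h1 with h1 | h1
      · exact Or.inl ((hx _).2 h1)
      · exact Or.inr ((hx _).2 h1)
    · rcases h2 with h2 | h2 | h2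
      · exact Or.inl h2
      · exact Or.inr (Or.inl (fun hc => h2 ((hx _).1 hc)))
      · exact Or.inr (Or.inr h2)
  · rw [if_neg h, if_neg]
    intro ⟨h1, h2, h3⟩
    apply h
    refine ⟨?_, ?_, (hx _).1 h3⟩
    · rcases h1 with h1 | h1
      · exact Or.inl ((hx _).1 h1)
      · exact Or.inr ((hx _).1 h1)
    · rcases h2 with h2 | h2 | h2
      · exact Or.inl h2
      · exact Or.inr (Or.inl (fun hc => h2 ((hx _).2 hc)))
      · exact Or.inr (Or.inr h2)

theorem infinite_iff_unbounded {E : Set ℕ} : E.Infinite ↔ ∀ k, ∃ x, k < x ∧ x ∈ E := by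
  constructor
  · intro h k
    obtain ⟨b, hb, hbk⟩ := h.exists_gt k
    exact ⟨b, hbk, hb⟩
  · intro h
    apply Set.infinite_of_not_bddAbove
    rintro ⟨b, hb⟩
    obtain ⟨x, hxb, hxE⟩ := h b
    exact absurd (hb hxE) (by omega)

theorem isCond_iff_psi (p : ℕ) : IsCond p ↔ ∀ z, PsiProp (Nat.pair p z) := by
  have hmemE : ∀ x, x ∈ condE p ↔
      evalo (χp (∅ : Set ℕ)) (decodeOC p.unpair.2) x = Part.some 1 := fun _ => Iff.rfl
  constructor
  · rintro ⟨⟨htot, hord⟩, hinf⟩ z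
    rw [PsiProp]
    simp only [Nat.unpair_pair]
    refine ⟨?_, ?_, ?_⟩
    · rcases htot z with h | h
      · exact Or.inl ((redVal_spec 0 _ _).2 h)
      · exact Or.inr ((redVal_spec 1 _ _).2 h)
    · by_cases hlen : lenD p.unpair.1 = 0
      · exact Or.inl hlen
      by_cases hz : z ∈ condE p
      · refine Or.inr (Or.inr ?_)
        have hmax : maxD p.unpair.1 ∈ condD p := maxD_mem (by omega)
        exact hord _ hmax _ hz
      · exact Or.inr (Or.inl (fun hc => hz ((hmemE z).2 ((redVal_spec 1 _ _).1 hc))))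
    · rw [redInf_spec _ _ htot]
      exact infinite_iff_unbounded.1 hinf z
  · intro h
    have htot : condETotal p := by
      intro z
      rcases (h z).1 with h1 | h1
      · exact Or.inl (by simpa using (redVal_spec 0 _ _).1 (by simpa using h1))
      · exact Or.inr (by simpa using (redVal_spec 1 _ _).1 (by simpa using h1))
    refine ⟨⟨htot, ?_⟩, ?_⟩
    · intro d hd x hx
      have h2 := (h x).2.1
      simp only [Nat.unpair_pair] at h2
      rcases h2 with h2 | h2 | h2
      · exfalso
        have := condD_card p
        have hpos : 0 < (condD p).card := Finset.card_pos.2 ⟨d, hd⟩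
        omega
      · exact absurd ((redVal_spec 1 _ _).2 ((hmemE x).1 hx)) h2
      · exact lt_of_le_of_lt (condD_le_maxD hd) h2
    · rw [infinite_iff_unbounded]
      intro k
      have h3 := (h k).2.2
      simp only [Nat.unpair_pair] at h3
      rw [redInf_spec _ _ htot] at h3
      exact h3

/-- Decision procedure for `IsCond` relative to `∅″`. -/
theorem isCond_dec : TotRecIn (χp (emptyJump 2)) (fun p => if IsCond p then 1 else 0) := by
  obtain ⟨c, hc⟩ := prRfindDom chiPsi_totRecIn
  have h1 : TotRecIn (χp (jump (jump (∅ : Set ℕ))))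
      (fun p => if (evalo (χp (jump (∅ : Set ℕ))) c p).Dom then 1 else 0) :=
    decInJump ⟨c, fun _ => rfl⟩
  have h2 : TotRecIn (χp (jump (jump (∅ : Set ℕ))))
      (fun p => 1 - (if (evalo (χp (jump (∅ : Set ℕ))) c p).Dom then 1 else 0)) :=
    TotRecIn.comb₂ Primrec.nat_sub (TotRecIn.of_primrec (Primrec.const 1)) h1
  have he : emptyJump 2 = jump (jump (∅ : Set ℕ)) := rfl
  rw [he]
  refine h2.of_eq fun p => ?_
  congr 1
  dsimp only
  rw [hc p]
  by_cases h : IsCond p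
  · rw [if_pos h, if_neg]
    rintro ⟨z, hz⟩
    have := (isCond_iff_psi p).1 h z
    rw [chiPsi, if_pos this] at hz
    simp at hz
  · rw [if_neg h, if_pos]
    by_contra hno
    push_neg at hno
    apply h
    rw [isCond_iff_psi]
    intro z
    by_contra hz
    have := hno z
    rw [chiPsi, if_neg hz] at this
    simp at this

end MathiasGenerics
namespace MathiasGenerics

/-! ### Phase 8: the dense condition sets and the main theorem -/

/-- Conditions whose finite part is nonempty and dominates `F` below its cardinality. -/
def Cset (F : ℕ → ℕ) : Set ℕ :=
  {p | IsCond p ∧ 1 ≤ lenD p.unpair.1 ∧ ∀ j < lenD p.unpair.1, F j < maxD p.unpair.1}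

theorem condSet_Cset (F : ℕ → ℕ) : CondSet (Cset F) := fun _ hp => hp.1

theorem Cset_iff {F : ℕ → ℕ} {p : ℕ} : p ∈ Cset F ↔
    IsCond p ∧ (1 ≤ lenD p.unpair.1 ∧ runMax F (lenD p.unpair.1 - 1) < maxD p.unpair.1) := by
  constructor
  · rintro ⟨h1, h2, h3⟩
    refine ⟨h1, h2, ?_⟩
    obtain ⟨j, hj, hje⟩ := runMax_mem F (lenD p.unpair.1 - 1)
    rw [hje]
    exact h3 j (by omega)
  · rintro ⟨h1, h2, h3⟩
    exact ⟨h1, h2, fun j hj => lt_of_le_of_lt (le_runMax F (by omega)) h3⟩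

theorem ceIn_Cset {m : ℕ} (hm : 2 ≤ m) {F : ℕ → ℕ}
    (hF : TotRecIn (χp (emptyJump m)) F) : CeIn (emptyJump m) (Cset F) := by
  have hIC : TotRecIn (χp (emptyJump m)) (fun p => if IsCond p then 1 else 0) :=
    isCond_dec.trans (chip_emptyJump_le hm)
  have hRM : TotRecIn (χp (emptyJump m)) (runMax F) := totrec_runMax hF
  have u1 : Primrec (fun t : ℕ => t.unpair.1) := Primrec.fst.comp Primrec.unpair
  have u2 : Primrec (fun t : ℕ => t.unpair.2) := Primrec.snd.comp Primrec.unpair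
  have hArg : Primrec (fun p : ℕ => lenD p.unpair.1 - 1) :=
    Primrec.nat_sub.comp (primrec_lenD.comp u1) (Primrec.const 1)
  have hpairP : TotRecIn (χp (emptyJump m))
      (fun p => Nat.pair (runMax F (lenD p.unpair.1 - 1)) p) :=
    (hRM.primrec_comp hArg).pair (TotRecIn.of_primrec Primrec.id)
  have hΦ : Primrec (fun t : ℕ =>
      if 1 ≤ lenD t.unpair.2.unpair.1 ∧ t.unpair.1 < maxD t.unpair.2.unpair.1
      then 1 else 0) := by
    apply Primrec.ite _ (Primrec.const 1) (Primrec.const 0)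
    exact PrimrecPred.and
      (Primrec.nat_le.comp (Primrec.const 1) (primrec_lenD.comp (u1.comp u2)))
      (Primrec.nat_lt.comp u1 (primrec_maxD.comp (u1.comp u2)))
  have hR : TotRecIn (χp (emptyJump m)) (fun p =>
      if 1 ≤ lenD p.unpair.1 ∧ runMax F (lenD p.unpair.1 - 1) < maxD p.unpair.1
      then 1 else 0) := by
    have := (TotRecIn.of_primrec hΦ).comp hpairP
    refine this.of_eq fun p => ?_
    congr 1
    simp only [Nat.unpair_pair]
  have hχ : TotRecIn (χp (emptyJump m)) (fun p => (if IsCond p then 1 else 0) *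
      (if 1 ≤ lenD p.unpair.1 ∧ runMax F (lenD p.unpair.1 - 1) < maxD p.unpair.1
        then 1 else 0)) := TotRecIn.comb₂ Primrec.nat_mul hIC hR
  obtain ⟨c, hc⟩ := prDom1 hχ
  refine ⟨c, ?_⟩
  ext p
  simp only [Set.mem_setOf_eq, hc p]
  constructor
  · intro hp
    obtain ⟨h1, h2, h3⟩ := Cset_iff.1 hp
    rw [if_pos h1, if_pos ⟨h2, h3⟩]
  · intro hp
    by_cases hA : IsCond p
    · by_cases hB : 1 ≤ lenD p.unpair.1 ∧ runMax F (lenD p.unpair.1 - 1) < maxD p.unpair.1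
      · exact Cset_iff.2 ⟨hA, hB⟩
      · rw [if_pos hA, if_neg hB] at hp; simp at hp
    · rw [if_neg hA] at hp; simp at hp

theorem dense_Cset {F : ℕ → ℕ} : DenseCond (Cset F) := by
  intro p0 hp0
  obtain ⟨⟨htot, hord⟩, hinf⟩ := hp0
  -- the characteristic function of E is computable
  have hmemE : ∀ y, y ∈ condE p0 ↔
      evalo (χp (∅ : Set ℕ)) (decodeOC p0.unpair.2) y = Part.some 1 := fun _ => Iff.rfl
  have hχE : TotRecIn (χp (∅ : Set ℕ)) (fun y => if y ∈ condE p0 then 1 else 0) := by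
    refine ⟨decodeOC p0.unpair.2, fun y => ?_⟩
    dsimp only
    rcases htot y with h | h
    · have hy : y ∉ condE p0 := fun hy => by rw [(hmemE y).1 hy] at h; simpa using h
      rw [h, if_neg hy]
    · rw [h, if_pos ((hmemE y).2 h)]
  -- choose a large element of E
  obtain ⟨x, hxgt, hxE⟩ :=
    infinite_iff_unbounded.1 hinf (runMax F (condD p0).card)
  have hxD : x ∉ condD p0 := fun hxd => lt_irrefl x (hord x hxd x hxE)
  -- the new condition
  have hgt : Primrec (fun y : ℕ => if x < y then 1 else 0) :=
    Primrec.ite (Primrec.nat_lt.comp (Primrec.const x) Primrec.id)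
      (Primrec.const 1) (Primrec.const 0)
  obtain ⟨cq, hcq⟩ := TotRecIn.comb₂ Primrec.nat_mul hχE (TotRecIn.of_primrec hgt)
  set q := Nat.pair (Denumerable.eqv (Finset ℕ) (insert x (condD p0))) (encodeOC cq) with hq
  have hq1 : q.unpair.1 = Denumerable.eqv (Finset ℕ) (insert x (condD p0)) := by
    rw [hq, Nat.unpair_pair]
  have hq2 : q.unpair.2 = encodeOC cq := by rw [hq, Nat.unpair_pair]
  have hqD : condD q = insert x (condD p0) := by
    rw [condD, hq1]
    exact Denumerable.ofNat_encode _
  have hqEv : ∀ y, evalo (χp (∅ : Set ℕ)) (decodeOC q.unpair.2) y =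
      Part.some ((if y ∈ condE p0 then 1 else 0) * (if x < y then 1 else 0)) := by
    intro y
    rw [hq2, decode_encode]
    exact hcq y
  have hqE : condE q = {y | y ∈ condE p0 ∧ x < y} := by
    ext y
    rw [Set.mem_setOf_eq, show (y ∈ condE q) ↔ evalo (χp (∅ : Set ℕ)) (decodeOC q.unpair.2) y
      = Part.some 1 from Iff.rfl, hqEv y]
    by_cases h1 : y ∈ condE p0 <;> by_cases h2 : x < y <;> simp [h1, h2]
  have hqtot : condETotal q := by
    intro y
    rw [hqEv y]
    by_cases h1 : y ∈ condE p0 <;> by_cases h2 : x < y <;> simp [h1, h2]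
  have hDle : ∀ d ∈ condD q, d ≤ x := by
    intro d hd
    rw [hqD, Finset.mem_insert] at hd
    rcases hd with rfl | hd
    · exact le_refl d
    · exact le_of_lt (hord d hd x hxE)
  have hqcond : IsCond q := by
    refine ⟨⟨hqtot, ?_⟩, ?_⟩
    · intro d hd y hy
      rw [hqE] at hy
      exact lt_of_le_of_lt (hDle d hd) hy.2
    · rw [infinite_iff_unbounded]
      intro k
      obtain ⟨y, hy1, hy2⟩ := infinite_iff_unbounded.1 hinf (max k x)
      exact ⟨y, by omega, by rw [hqE]; exact ⟨hy2, by omega⟩⟩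
  have hcard : (condD q).card = (condD p0).card + 1 := by
    rw [hqD, Finset.card_insert_of_notMem hxD]
  have hlenq : 1 ≤ lenD q.unpair.1 := by
    have := condD_card q
    omega
  have hmaxq : maxD q.unpair.1 = x := by
    have h1 : maxD q.unpair.1 ∈ condD q := maxD_mem hlenq
    have h2 : x ∈ condD q := by rw [hqD]; exact Finset.mem_insert_self x _
    exact le_antisymm (hDle _ h1) (condD_le_maxD h2)
  refine ⟨q, ⟨hqcond, hlenq, ?_⟩, ?_, ?_, ?_⟩
  · intro j hj
    have hlen : lenD q.unpair.1 = (condD p0).card + 1 := by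
      rw [← condD_card q, hcard]
    rw [hmaxq]
    exact lt_of_le_of_lt (le_runMax F (by omega)) hxgt
  · rw [hqD]; exact Finset.subset_insert x _
  · rw [hqD]
    intro y hy
    rcases Finset.mem_insert.1 hy with rfl | hyD
    · exact Or.inr hxE
    · exact Or.inl hyD
  · rw [hqE]
    intro y hy
    exact hy.1

theorem escape {G : Set ℕ} {F : ℕ → ℕ} {p : ℕ} (hp : p ∈ Cset F) (hSat : Sat G p) :
    ∃ m, F m < Nat.nth (· ∈ G) m := by
  obtain ⟨hC, hlen, hesc⟩ := hp
  obtain ⟨hDG, hGDE⟩ := hSat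
  have hxD : maxD p.unpair.1 ∈ condD p := maxD_mem hlen
  have hxG : maxD p.unpair.1 ∈ G := hDG hxD
  have hnth : Nat.nth (· ∈ G) (Nat.count (· ∈ G) (maxD p.unpair.1)) = maxD p.unpair.1 :=
    Nat.nth_count hxG
  have hsubset : (Finset.range (maxD p.unpair.1)).filter (· ∈ G) ⊆
      (condD p).erase (maxD p.unpair.1) := by
    intro y hy
    rw [Finset.mem_filter, Finset.mem_range] at hy
    obtain ⟨hyx, hyG⟩ := hy
    rcases hGDE hyG with hyD | hyE
    · exact Finset.mem_erase.2 ⟨by omega, hyD⟩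
    · exact absurd (hC.1.2 _ hxD y hyE) (by omega)
  have hm : Nat.count (· ∈ G) (maxD p.unpair.1) < lenD p.unpair.1 := by
    have h1 := Nat.count_eq_card_filter_range (· ∈ G) (maxD p.unpair.1)
    have h2 := Finset.card_le_card hsubset
    have h3 : ((condD p).erase (maxD p.unpair.1)).card = (condD p).card - 1 :=
      Finset.card_erase_of_mem hxD
    have h4 := condD_card p
    omega
  exact ⟨_, by rw [hnth]; exact hesc _ hm⟩

end MathiasGenerics

namespace MathiasGenerics
/-- Every weakly Mathias `n`-generic set (`n ≥ 3`) is hyperimmune relative to `∅⁽ⁿ⁻¹⁾`. -/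
theorem weakly_generic_hyperimmune (n : ℕ) (hn : 3 ≤ n) (G : Set ℕ)
    (hG : WMGen n G) : HypImmRel G (emptyJump (n - 1)) := by
  have hn' : n = (n - 1) + 1 := by omega
  have hm2 : 2 ≤ n - 1 := by omega
  have main : ∀ F : ℕ → ℕ, TotRecIn (χp (emptyJump (n - 1))) F → ∃ p ∈ Cset F, Sat G p := by
    intro F hF
    have hsig : Sigma0 n (Cset F) := by
      rw [hn']
      show CeIn (emptyJump (n - 1)) (Cset F)
      exact ceIn_Cset hm2 hF
    exact hG _ hsig (condSet_Cset F) dense_Cset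
  constructor
  · rw [infinite_iff_unbounded]
    intro k
    obtain ⟨p, hp, hSat⟩ := main (fun _ => k) (TotRecIn.of_primrec (Primrec.const k))
    obtain ⟨hC, hlen, hesc⟩ := hp
    exact ⟨maxD p.unpair.1, hesc 0 (by omega), hSat.1 (maxD_mem hlen)⟩
  · intro f hf
    obtain ⟨p, hp, hSat⟩ := main f hf
    exact escape hp hSat

end MathiasGenerics
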